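/- For every integer k ≥ 0 and all real numbers x₁, x₂ with 0 < x₂ ≤ x₁, the integral R_k(x₁,x₂) = ∫₀¹ (x₂ + t(x₁−x₂))^k / √(t(1−t)) dt equals π·s₂^k·P_k(s₁/s₂), where s₁ = (x₁+x₂)/2, s₂ = √(x₁x₂), and P_k is the k-th Legendre polynomial. -/

import Mathlib

open MeasureTheory Set Finset Real


lemma term_id {k j m : ℕ} (hmj : m ≤ j) (hjk : j ≤ k) :
    k.choose (2*m) * ((2*m).choose m) * ((k-2*m).choose (j-m)) =
      k.choose j * (j.choose m) * ((k-j).choose m) := by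
  by_cases hm : m ≤ k - j
  · have h2m : 2*m ≤ k := by omega
    have hjm : j - m ≤ k - 2*m := by omega
    have e1 : k.choose (2*m) * (2*m).factorial * (k-2*m).factorial = k.factorial :=
      Nat.choose_mul_factorial_mul_factorial h2m
    have e2 : (2*m).choose m * m.factorial * m.factorial = (2*m).factorial := by
      have := Nat.choose_mul_factorial_mul_factorial (show m ≤ 2*m by omega)
      rw [show 2*m-m = m by omega] at this; exact this
    have e3 : (k-2*m).choose (j-m) * (j-m).factorial * (k-j-m).factorial = (k-2*m).factorial := by
      have := Nat.choose_mul_factorial_mul_factorial hjm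
      rw [show k-2*m-(j-m) = k-j-m by omega] at this; exact this
    have f1 : k.choose j * j.factorial * (k-j).factorial = k.factorial :=
      Nat.choose_mul_factorial_mul_factorial hjk
    have f2 : j.choose m * m.factorial * (j-m).factorial = j.factorial :=
      Nat.choose_mul_factorial_mul_factorial hmj
    have f3 : (k-j).choose m * m.factorial * (k-j-m).factorial = (k-j).factorial :=
      Nat.choose_mul_factorial_mul_factorial hm
    have L : (k.choose (2*m) * ((2*m).choose m) * ((k-2*m).choose (j-m))) *
        (m.factorial * m.factorial * ((j-m).factorial * (k-j-m).factorial)) = k.factorial := by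
      rw [← e1, ← e3, ← e2]; ring
    have R : (k.choose j * (j.choose m) * ((k-j).choose m)) *
        (m.factorial * m.factorial * ((j-m).factorial * (k-j-m).factorial)) = k.factorial := by
      rw [← f1, ← f2, ← f3]; ring
    exact Nat.eq_of_mul_eq_mul_right
      (by positivity) (L.trans R.symm)
  · have h1 : (k-j).choose m = 0 := Nat.choose_eq_zero_of_lt (by omega)
    by_cases h2 : 2*m ≤ k
    · have : (k-2*m).choose (j-m) = 0 := Nat.choose_eq_zero_of_lt (by omega)
      simp [this, h1]
    · have : k.choose (2*m) = 0 := Nat.choose_eq_zero_of_lt (by omega)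
      simp [this, h1]

-- Vandermonde variant: ∑_{m ≤ j} C(j,m) C(k-j,m) = C(k,j)  (for j ≤ k)
lemma vdm {k j : ℕ} (hjk : j ≤ k) :
    ∑ m ∈ range (j+1), j.choose m * (k-j).choose m = k.choose j := by
  have h := Nat.add_choose_eq j (k-j) j
  rw [show j + (k-j) = k by omega] at h
  rw [Finset.Nat.sum_antidiagonal_eq_sum_range_succ_mk] at h
  rw [h]
  rw [← Finset.sum_range_reflect]
  refine Finset.sum_congr rfl fun m hm => ?_
  simp only [Finset.mem_range] at hm
  rw [show j + 1 - 1 - m = j - m by omega]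
  rw [Nat.choose_symm (show m ≤ j by omega)]

lemma key_id (k : ℕ) (u v : ℝ) :
    ∑ m ∈ range (k+1), (k.choose (2*m) * (2*m).choose m : ℝ) * (u*v)^m * (u+v)^(k-2*m)
      = ∑ j ∈ range (k+1), (k.choose j : ℝ)^2 * u^j * v^(k-j) := by
  have hψ : ∀ m ∈ range (k+1),
      (k.choose (2*m) * (2*m).choose m : ℝ) * (u*v)^m * (u+v)^(k-2*m)
        = ∑ j ∈ range (k+1), (if m ≤ j then
            (k.choose (2*m) * ((2*m).choose m) * ((k-2*m).choose (j-m)) : ℝ) else 0)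
            * u^j * v^(k-j) := by
    intro m _
    by_cases h2m : 2*m ≤ k
    · rw [add_pow, Finset.mul_sum]
      have hsub : Finset.Ico m (k-m+1) ⊆ Finset.range (k+1) := by
        intro j hj; simp only [Finset.mem_Ico, Finset.mem_range] at *; omega
      rw [← Finset.sum_subset hsub (fun j hj hnj => ?_), Finset.sum_Ico_eq_sum_range,
        show k - m + 1 - m = k - 2*m + 1 by omega]
      · refine Finset.sum_congr rfl fun l hl => ?_
        simp only [Finset.mem_range] at hl
        rw [if_pos (by omega), show m + l - m = l by omega,
          show k - (m + l) = (k - 2*m - l) + m by omega]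
        push_cast
        rw [pow_add, pow_add, mul_pow]
        ring
      · simp only [Finset.mem_range] at hj
        simp only [Finset.mem_Ico, not_and_or, not_le] at hnj
        rcases hnj with h | h
        · rw [if_neg (by omega)]; ring
        · rw [if_pos (by omega),
            Nat.choose_eq_zero_of_lt (show k - 2*m < j - m by omega)]
          push_cast; ring
    · rw [Nat.choose_eq_zero_of_lt (show k < 2*m by omega)]
      push_cast
      refine Eq.trans (by ring) (Finset.sum_eq_zero fun j _ => ?_).symm
      split_ifs <;> ring
  rw [Finset.sum_congr rfl hψ, Finset.sum_comm]
  refine Finset.sum_congr rfl fun j hj => ?_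
  simp only [Finset.mem_range] at hj
  rw [← Finset.sum_subset (Finset.range_subset_range.mpr (show j+1 ≤ k+1 by omega))
    (fun m hm hnm => ?_)]
  · rw [← Finset.sum_mul, ← Finset.sum_mul]
    congr 1
    have : ∀ m ∈ range (j+1),
        (if m ≤ j then (k.choose (2*m) * ((2*m).choose m) * ((k-2*m).choose (j-m)) : ℝ) else 0)
          = ((k.choose j * (j.choose m) * ((k-j).choose m) : ℕ) : ℝ) := by
      intro m hm
      simp only [Finset.mem_range] at hm
      rw [if_pos (by omega), ← term_id (by omega) (by omega)]
      push_cast; ring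
    rw [Finset.sum_congr rfl this, ← Nat.cast_sum]
    rw [show ∑ m ∈ range (j+1), k.choose j * (j.choose m) * ((k-j).choose m)
        = k.choose j * ∑ m ∈ range (j+1), (j.choose m) * ((k-j).choose m) by
      rw [Finset.mul_sum]; exact Finset.sum_congr rfl fun m _ => by ring]
    rw [vdm (by omega)]
    push_cast; ring
  · simp only [Finset.mem_range] at hm hnm
    rw [if_neg (by omega)]; ring


/-- The `k`-th Legendre polynomial, given by Rodrigues' formula
`P_k(x) = (1/(2^k k!)) dᵏ/dxᵏ (x²−1)^k`. -/
noncomputable def legendreFun (k : ℕ) (x : ℝ) : ℝ :=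
  (1 / ((2 : ℝ) ^ k * (Nat.factorial k : ℝ))) *
    iteratedDeriv k (fun y : ℝ => (y ^ 2 - 1) ^ k) x

lemma legendre_explicit (k : ℕ) (x : ℝ) :
    legendreFun k x
      = (∑ j ∈ range (k+1), (k.choose j : ℝ)^2 * (x-1)^j * (x+1)^(k-j)) / 2^k := by
  have hiter : ∀ (n : ℕ) (p : Polynomial ℝ),
      iteratedDeriv n (fun y => p.eval y) = fun y => (Polynomial.derivative^[n] p).eval y := by
    intro n
    induction n with
    | zero => intro p; simp
    | succ n ih =>
      intro p
      rw [iteratedDeriv_succ, ih]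
      funext y
      rw [Function.iterate_succ_apply']
      exact Polynomial.deriv (p := Polynomial.derivative^[n] p)
  have hfun : (fun y : ℝ => (y^2 - 1)^k)
      = fun y => (((Polynomial.X - Polynomial.C 1)^k
          * (Polynomial.X - Polynomial.C (-1))^k : Polynomial ℝ)).eval y := by
    funext y; simp only [Polynomial.eval_mul, Polynomial.eval_pow, Polynomial.eval_sub,
      Polynomial.eval_X, Polynomial.eval_C, ← mul_pow]; congr 1; ring
  rw [legendreFun, hfun, hiter, Polynomial.iterate_derivative_mul]
  simp only [Polynomial.iterate_derivative_X_sub_pow, Polynomial.eval_finset_sum,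
    Polynomial.eval_smul, Polynomial.eval_mul, smul_eq_mul, Polynomial.eval_pow,
    Polynomial.eval_sub, Polynomial.eval_X, Polynomial.eval_C, smul_mul_assoc, mul_smul]
  rw [Finset.mul_sum, Finset.sum_div]
  refine Finset.sum_congr rfl fun j hj => ?_
  simp only [Finset.mem_range] at hj
  have hj' : j ≤ k := by omega
  have hnat : k.choose j * (k.descFactorial (k-j) * k.descFactorial j)
      = k.factorial * (k.choose j)^2 := by
    rw [Nat.descFactorial_eq_factorial_mul_choose, Nat.descFactorial_eq_factorial_mul_choose,
      Nat.choose_symm hj']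
    rw [show k.choose j * ((k-j).factorial * k.choose j * (j.factorial * k.choose j))
        = (k.choose j * j.factorial * (k-j).factorial) * (k.choose j)^2 by ring,
      Nat.choose_mul_factorial_mul_factorial hj']
  rw [show k - (k - j) = j by omega]
  have hfac : (k.factorial : ℝ) ≠ 0 := by positivity
  field_simp
  have hr := congrArg (Nat.cast : ℕ → ℝ) hnat
  push_cast at hr
  linear_combination hr * ((-1+x)^j * (1+x)^(k-j))

lemma cos_pow_step (n : ℕ) :
    (∫ x in (0:ℝ)..π, Real.cos x ^ (n+2))
      = (n+1)/(n+2) * ∫ x in (0:ℝ)..π, Real.cos x ^ n := by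
  rw [integral_cos_pow]
  simp [Real.sin_pi]

lemma cos_pow_odd (m : ℕ) : (∫ x in (0:ℝ)..π, Real.cos x ^ (2*m+1)) = 0 := by
  induction m with
  | zero => simpa using integral_cos (a := 0) (b := π)
  | succ m ih =>
    rw [show 2*(m+1)+1 = (2*m+1)+2 by ring, cos_pow_step, ih, mul_zero]

lemma cos_pow_even (m : ℕ) :
    (∫ x in (0:ℝ)..π, Real.cos x ^ (2*m)) = π * ((2*m).choose m) / 4^m := by
  induction m with
  | zero => simp
  | succ m ih =>
    rw [show 2*(m+1) = (2*m)+2 by ring, cos_pow_step, ih]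
    have hc : ((2*m+2).choose (m+1) : ℝ) * (m+1) = 2 * (2*m+1) * ((2*m).choose m) := by
      have h := Nat.succ_mul_centralBinom_succ m
      simp only [Nat.centralBinom, show 2*(m+1) = 2*m+2 by ring] at h
      have := congrArg (Nat.cast : ℕ → ℝ) h
      push_cast at this
      push_cast
      linarith [this]
    have h1 : (m:ℝ) + 1 ≠ 0 := by positivity
    have hb : ((2*m+2).choose (m+1) : ℝ) = 2*(2*m+1)*((2*m).choose m)/(m+1) := by
      field_simp
      linarith [hc]
    rw [hb]
    push_cast
    field_simp
    ring

lemma image_phi : (fun θ : ℝ => (1 - Real.cos θ)/2) '' Ioo 0 π = Ioo (0:ℝ) 1 := by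
  ext t
  constructor
  · rintro ⟨θ, hθ, rfl⟩
    obtain ⟨h0, hπ⟩ := hθ
    have h1 : Real.cos θ < Real.cos 0 :=
      Real.strictAntiOn_cos ⟨le_refl 0, Real.pi_pos.le⟩ ⟨h0.le, hπ.le⟩ h0
    have h2 : Real.cos π < Real.cos θ :=
      Real.strictAntiOn_cos ⟨h0.le, hπ.le⟩ ⟨Real.pi_pos.le, le_refl π⟩ hπ
    rw [Real.cos_zero] at h1
    rw [Real.cos_pi] at h2
    constructor <;> simp <;> linarith
  · intro ht
    refine ⟨Real.arccos (1 - 2*t), ⟨?_, ?_⟩, ?_⟩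
    · exact Real.arccos_pos.mpr (by linarith [ht.1])
    · refine lt_of_le_of_ne (Real.arccos_le_pi _) fun h => ?_
      rw [Real.arccos_eq_pi] at h
      linarith [ht.2]
    · show (1 - Real.cos (Real.arccos (1 - 2*t)))/2 = t
      rw [Real.cos_arccos (by linarith [ht.2]) (by linarith [ht.1])]
      ring

lemma subst_integral (g : ℝ → ℝ) :
    ∫ t in Ioo (0:ℝ) 1, g t
      = ∫ θ in Ioo (0:ℝ) π, |Real.sin θ / 2| * g ((1 - Real.cos θ)/2) := by
  rw [← image_phi]
  rw [integral_image_eq_integral_abs_deriv_smul measurableSet_Ioo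
    (f' := fun θ => Real.sin θ / 2)
    (fun θ _ => by simpa using (((Real.hasDerivAt_cos θ).const_sub 1).div_const 2).hasDerivWithinAt (s := Ioo 0 π))
    ?_ g]
  · simp [smul_eq_mul]
  · intro a ha b hb hab
    refine Real.injOn_cos ⟨ha.1.le, ha.2.le⟩ ⟨hb.1.le, hb.2.le⟩ ?_
    have h : (1 - Real.cos a) / 2 = (1 - Real.cos b)/2 := hab
    linarith [h]

lemma sum_pair (g : ℕ → ℝ) (n : ℕ) :
    ∑ i ∈ range (2*n), g i = ∑ m ∈ range n, (g (2*m) + g (2*m+1)) := by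
  induction n with
  | zero => simp
  | succ n ih =>
    rw [show 2*(n+1) = (2*n+1)+1 by ring, Finset.sum_range_succ, Finset.sum_range_succ,
      Finset.sum_range_succ, ih]
    ring

lemma even_filter (k : ℕ) (f : ℕ → ℝ) (hbig : ∀ i, k < i → f i = 0)
    (hodd : ∀ m, f (2*m+1) = 0) :
    ∑ i ∈ range (k+1), f i = ∑ m ∈ range (k+1), f (2*m) := by
  rw [Finset.sum_subset (Finset.range_subset_range.mpr (show k+1 ≤ 2*(k+1) by omega))
    (fun i hi hni => hbig i (by simp only [Finset.mem_range] at *; omega))]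
  rw [sum_pair]
  exact Finset.sum_congr rfl fun m _ => by rw [hodd m, add_zero]


/-- `∫₀¹ (x₂+t(x₁−x₂))^k/√(t(1−t)) dt = π s₂^k P_k(s₁/s₂)` with
`s₁ = (x₁+x₂)/2`, `s₂ = √(x₁x₂)`. -/
theorem stmt_8 (k : ℕ) (x₁ x₂ : ℝ) (h0 : 0 < x₂) (h12 : x₂ ≤ x₁) :
    ∫ t in Ioo (0 : ℝ) 1, (x₂ + t * (x₁ - x₂)) ^ k / Real.sqrt (t * (1 - t)) =
      Real.pi * Real.sqrt (x₁ * x₂) ^ k *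
        legendreFun k (((x₁ + x₂) / 2) / Real.sqrt (x₁ * x₂)) := by
  have hx1 : 0 < x₁ := lt_of_lt_of_le h0 h12
  set s₂ : ℝ := Real.sqrt (x₁ * x₂) with hs₂def
  have hs₂pos : 0 < s₂ := Real.sqrt_pos.mpr (by positivity)
  have hs₂sq : s₂^2 = x₁ * x₂ := Real.sq_sqrt (by positivity)
  set s₁ : ℝ := (x₁ + x₂)/2 with hs₁def
  set c : ℝ := (x₁ - x₂)/2 with hcdef
  -- Step A+B: substitution
  rw [subst_integral]
  have hEq : EqOn
      (fun θ : ℝ => |Real.sin θ / 2| *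
        ((x₂ + (1 - Real.cos θ)/2 * (x₁ - x₂)) ^ k /
          Real.sqrt ((1 - Real.cos θ)/2 * (1 - (1 - Real.cos θ)/2))))
      (fun θ : ℝ => (s₁ - c * Real.cos θ)^k) (Ioo 0 π) := by
    intro θ hθ
    have hsin : 0 < Real.sin θ := Real.sin_pos_of_pos_of_lt_pi hθ.1 hθ.2
    have hsq : (1 - Real.cos θ)/2 * (1 - (1 - Real.cos θ)/2) = (Real.sin θ/2)^2 := by
      have h := Real.sin_sq_add_cos_sq θ
      linear_combination (-(1:ℝ)/4) * h
    simp only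
    rw [hsq, Real.sqrt_sq (by linarith), abs_of_pos (by linarith),
      mul_div_cancel₀ _ (by linarith : Real.sin θ / 2 ≠ 0)]
    congr 1
    rw [hs₁def, hcdef]; ring
  rw [setIntegral_congr_fun measurableSet_Ioo hEq]
  rw [← integral_Ioc_eq_integral_Ioo, ← intervalIntegral.integral_of_le Real.pi_pos.le]
  -- Step D: binomial expansion
  have hbin : ∀ θ : ℝ, (s₁ - c * Real.cos θ)^k
      = ∑ i ∈ range (k+1), ((k.choose i : ℝ) * (-c)^i * s₁^(k-i)) * Real.cos θ^i := by
    intro θ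
    rw [show s₁ - c * Real.cos θ = (-c) * Real.cos θ + s₁ by ring, add_pow]
    exact Finset.sum_congr rfl fun i _ => by rw [mul_pow]; ring
  simp only [hbin]
  rw [intervalIntegral.integral_finset_sum (fun i _ =>
    (Continuous.intervalIntegrable (by continuity) 0 π))]
  simp only [intervalIntegral.integral_const_mul]
  -- Step E: drop odd terms
  rw [even_filter k _ (fun i hi => by
      rw [Nat.choose_eq_zero_of_lt hi]; push_cast; ring)
    (fun m => by rw [cos_pow_odd]; ring)]
  -- Step F: rewrite each even term
  have hF : ∀ m ∈ range (k+1),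
      (k.choose (2*m) : ℝ) * (-c)^(2*m) * s₁^(k-2*m) * ∫ x in (0:ℝ)..π, Real.cos x ^ (2*m)
        = π * ((k.choose (2*m) * (2*m).choose m : ℝ)
            * (((s₁-s₂)/2) * ((s₁+s₂)/2))^m * (((s₁-s₂)/2) + ((s₁+s₂)/2))^(k-2*m)) := by
    intro m _
    rw [cos_pow_even]
    have huv : ((s₁-s₂)/2) * ((s₁+s₂)/2) = c^2/4 := by
      rw [hs₁def, hcdef]
      linear_combination (-(1:ℝ)/4) * hs₂sq
    rw [huv, show ((s₁-s₂)/2) + ((s₁+s₂)/2) = s₁ by ring]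
    rw [show (-c)^(2*m) = (c^2)^m by rw [pow_mul]; ring_nf]
    rw [div_pow (c^2) 4 m]
    push_cast
    field_simp
  rw [Finset.sum_congr rfl hF, ← Finset.mul_sum, key_id]
  -- Step H: Legendre side
  rw [legendre_explicit]
  rw [Finset.sum_div, Finset.mul_sum, Finset.mul_sum]
  refine Finset.sum_congr rfl fun j hj => ?_
  simp only [Finset.mem_range] at hj
  have hj' : j ≤ k := by omega
  have e1 : s₂ * (s₁/s₂ - 1) = s₁ - s₂ := by field_simp
  have e2 : s₂ * (s₁/s₂ + 1) = s₁ + s₂ := by field_simp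
  have hsplit : (s₂:ℝ)^k = s₂^j * s₂^(k-j) := by
    rw [← pow_add, Nat.add_sub_cancel' hj']
  have hsplit2 : (2:ℝ)^k = 2^j * 2^(k-j) := by
    rw [← pow_add, Nat.add_sub_cancel' hj']
  calc π * ((k.choose j : ℝ)^2 * ((s₁-s₂)/2)^j * ((s₁+s₂)/2)^(k-j))
      = π * ((k.choose j : ℝ)^2 * ((s₂ * (s₁/s₂ - 1))/2)^j * ((s₂ * (s₁/s₂ + 1))/2)^(k-j)) := by
        rw [e1, e2]
    _ = π * s₂^k * ((k.choose j : ℝ)^2 * (s₁/s₂-1)^j * (s₁/s₂+1)^(k-j) / 2^k) := by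
        rw [hsplit, hsplit2, div_pow, div_pow, mul_pow, mul_pow]
        ring
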